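/- For n ≥ 2, the monic polynomial C(n,x) := ∏_{k=1, gcd(k,2n)=1}^{n-1} (x - 2cos(kπ/n)) is the minimal polynomial of 2cos(π/n) over ℚ, and it has integer coefficients and degree φ(2n)/2, where φ is Euler's totient function. -/

import Mathlib

open Real Polynomial IntermediateField

set_option maxHeartbeats 1000000
set_option synthInstance.maxHeartbeats 400000
noncomputable section
namespace TwoCos

variable (n : ℕ)

def zc (n : ℕ) : ℂ := Complex.exp (Real.pi * Complex.I / n)

theorem zc_prim (hn : 2 ≤ n) : IsPrimitiveRoot (zc n) (2 * n) := by
  have h := Complex.isPrimitiveRoot_exp (2 * n) (by omega)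
  convert h using 2
  rw [zc]
  push_cast
  rw [show (2:ℂ) * ↑π * Complex.I / (2 * ↑n) = (2 * (↑π * Complex.I)) / (2 * ↑n) by ring,
    mul_div_mul_left _ _ (two_ne_zero)]

theorem zc_pow (k : ℕ) : (zc n) ^ k = Complex.exp ((k * π / n : ℝ) * Complex.I) := by
  rw [zc, ← Complex.exp_nat_mul]
  push_cast
  ring_nf

theorem zc_add_inv (k : ℕ) :
    (zc n) ^ k + ((zc n) ^ k)⁻¹ = ((2 * Real.cos (k * π / n) : ℝ) : ℂ) := by
  rw [zc_pow, ← Complex.exp_neg]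
  push_cast
  rw [Complex.cos]
  ring_nf


theorem isIntegral_cos (hn : 2 ≤ n) (k : ℕ) :
    IsIntegral ℤ (2 * Real.cos (k * π / n)) := by
  refine (isIntegral_algebraMap_iff (R := ℤ) (A := ℝ) (B := ℂ) (algebraMap ℝ ℂ).injective).mp ?_
  have h : (algebraMap ℝ ℂ) (2 * Real.cos (k * π / n)) = (zc n) ^ k + ((zc n) ^ k)⁻¹ :=
    (zc_add_inv n k).symm
  rw [h]
  have hint : IsIntegral ℤ (zc n) := (zc_prim n hn).isIntegral (by omega)
  have hz : (zc n) ^ (2 * n) = 1 := (zc_prim n hn).pow_eq_one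
  have heq : k * (2 * n - 1) + k = k * (2 * n) := by
    have h1 : 1 ≤ 2 * n := by omega
    calc k * (2 * n - 1) + k = k * (2 * n - 1 + 1) := by ring
    _ = k * (2 * n) := by rw [Nat.sub_add_cancel h1]
  have h2 : ((zc n) ^ k)⁻¹ = (zc n) ^ (k * (2 * n - 1)) :=
    inv_eq_of_mul_eq_one_left (by rw [← pow_add, heq, pow_mul', hz, one_pow])
  rw [h2]
  exact (hint.pow k).add (hint.pow _)

theorem aeval_conj (hn : 2 ≤ n) (k : ℕ) (hk : Nat.gcd k (2 * n) = 1) :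
    (Polynomial.aeval (2 * Real.cos (k * π / n)))
      (minpoly ℚ ((2:ℝ) * Real.cos (π / n))) = 0 := by
  set m := minpoly ℚ ((2:ℝ) * Real.cos (π / n)) with hm
  have hnpos : 0 < 2 * n := by omega
  have hprim := zc_prim n hn
  have hζint : IsIntegral ℚ (zc n) := (hprim.isIntegral hnpos).tower_top
  set pb := IntermediateField.adjoin.powerBasis hζint with hpb
  have hgen : pb.gen = AdjoinSimple.gen ℚ (zc n) := rfl
  have hmin : minpoly ℚ pb.gen = cyclotomic (2 * n) ℚ := by
    rw [hgen]; erw [minpoly_gen]; rw [← cyclotomic_eq_minpoly_rat hprim hnpos]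
  have hy : (Polynomial.aeval ((zc n) ^ k)) (minpoly ℚ pb.gen) = 0 := by
    rw [hmin]
    have hprimk : IsPrimitiveRoot ((zc n) ^ k) (2 * n) :=
      hprim.pow_of_coprime k hk
    have := hprimk.isRoot_cyclotomic hnpos
    rw [Polynomial.aeval_def, Polynomial.eval₂_eq_eval_map, map_cyclotomic]
    exact this
  set f := pb.lift ((zc n) ^ k) hy with hf
  -- α as element of ℚ⟮zc n⟯
  have hmemζ : zc n ∈ ℚ⟮zc n⟯ := IntermediateField.mem_adjoin_simple_self ℚ (zc n)
  set aF : ℚ⟮zc n⟯ := AdjoinSimple.gen ℚ (zc n) + (AdjoinSimple.gen ℚ (zc n))⁻¹ with haF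
  have haFc : (algebraMap ℚ⟮zc n⟯ ℂ) aF = ((2 * Real.cos (π / n) : ℝ) : ℂ) := by
    have h1 := zc_add_inv n 1
    rw [pow_one] at h1
    rw [Nat.cast_one, one_mul] at h1
    rw [haF, map_add, map_inv₀, AdjoinSimple.algebraMap_gen]
    exact h1
  have hminaF : minpoly ℚ aF = m := by
    rw [hm]
    rw [← minpoly.algebraMap_eq (algebraMap ℚ⟮zc n⟯ ℂ).injective aF, haFc]
    have : ((2 * Real.cos (π / n) : ℝ) : ℂ) = algebraMap ℝ ℂ ((2:ℝ) * Real.cos (π / n)) := by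
      norm_num
    rw [this, minpoly.algebraMap_eq (algebraMap ℝ ℂ).injective]
  have h0 : (Polynomial.aeval aF) m = 0 := by rw [← hminaF]; exact minpoly.aeval ℚ aF
  have h1 : (Polynomial.aeval (f aF)) m = 0 := by
    rw [Polynomial.aeval_algHom_apply, h0, map_zero]
  have hfa : f aF = ((2 * Real.cos (k * π / n) : ℝ) : ℂ) := by
    rw [haF, map_add, map_inv₀, ← hgen]; erw [PowerBasis.lift_gen]; rw [zc_add_inv]
  rw [hfa] at h1
  have h2 : algebraMap ℝ ℂ ((Polynomial.aeval (2 * Real.cos (k * π / n))) m) = 0 := by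
    rw [← Polynomial.aeval_algebraMap_apply]
    exact_mod_cast h1
  exact (algebraMap ℝ ℂ).injective (by rw [h2, map_zero])


/-- The subfield of real numbers in ℂ as an intermediate field over ℚ. -/
def Rfield : IntermediateField ℚ ℂ :=
  Subalgebra.toIntermediateField ((Complex.ofRealAm.restrictScalars ℚ).range) (by
    rintro x ⟨r, rfl⟩
    exact ⟨r⁻¹, by simp [Complex.ofRealAm_coe]⟩)

theorem mem_Rfield_iff (x : ℂ) : x ∈ Rfield ↔ ∃ r : ℝ, (r : ℂ) = x := by
  rfl

theorem totient_eq (hn : 2 ≤ n) :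
    Nat.totient (2 * n) = 2 * (minpoly ℚ ((2:ℝ) * Real.cos (π / n))).natDegree := by
  set m := minpoly ℚ ((2:ℝ) * Real.cos (π / n)) with hm
  have hnpos : 0 < 2 * n := by omega
  have hprim := zc_prim n hn
  have hζint : IsIntegral ℚ (zc n) := (hprim.isIntegral hnpos).tower_top
  -- F := ℚ⟮zc n⟯
  haveI : FiniteDimensional ℚ ℚ⟮zc n⟯ := (IntermediateField.adjoin.powerBasis hζint).finite
  have hrankF : Module.finrank ℚ ℚ⟮zc n⟯ = Nat.totient (2 * n) := by
    rw [IntermediateField.adjoin.finrank hζint, ← cyclotomic_eq_minpoly_rat hprim hnpos,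
      natDegree_cyclotomic]
  -- α as element of F
  set genζ := AdjoinSimple.gen ℚ (zc n) with hgenζ
  set aF : ℚ⟮zc n⟯ := genζ + genζ⁻¹ with haF
  have h1 := zc_add_inv n 1
  rw [pow_one, Nat.cast_one, one_mul] at h1
  have haFc : (algebraMap ℚ⟮zc n⟯ ℂ) aF = ((2 * Real.cos (π / n) : ℝ) : ℂ) := by
    rw [haF, map_add, map_inv₀, AdjoinSimple.algebraMap_gen]
    exact h1
  have hminaF : minpoly ℚ aF = m := by
    rw [hm, ← minpoly.algebraMap_eq (algebraMap ℚ⟮zc n⟯ ℂ).injective aF, haFc]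
    have : ((2 * Real.cos (π / n) : ℝ) : ℂ) = algebraMap ℝ ℂ ((2:ℝ) * Real.cos (π / n)) := by
      norm_num
    rw [this, minpoly.algebraMap_eq (algebraMap ℝ ℂ).injective]
  have haFint : IsIntegral ℚ aF := IsIntegral.of_finite ℚ aF
  -- K' := ℚ⟮aF⟯ inside F
  set K' : IntermediateField ℚ ℚ⟮zc n⟯ := IntermediateField.adjoin ℚ {aF} with hK'
  have hrankK : Module.finrank ℚ (↥K') = m.natDegree := by
    rw [hK', IntermediateField.adjoin.finrank haFint, hminaF]
  -- F = K'⟮genζ⟯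
  have hQgen : IntermediateField.adjoin ℚ {genζ} = (⊤ : IntermediateField ℚ ℚ⟮zc n⟯) := by
    apply IntermediateField.map_injective (IntermediateField.val ℚ⟮zc n⟯)
    have e1 : (IntermediateField.adjoin ℚ {genζ}).map (IntermediateField.val ℚ⟮zc n⟯)
        = IntermediateField.lift (IntermediateField.adjoin ℚ {genζ}) := rfl
    have e2 : (⊤ : IntermediateField ℚ ℚ⟮zc n⟯).map (IntermediateField.val ℚ⟮zc n⟯)
        = IntermediateField.lift (⊤ : IntermediateField ℚ ℚ⟮zc n⟯) := rfl
    rw [e1, e2, IntermediateField.lift_adjoin_simple]; erw [IntermediateField.lift_top]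
    rfl
  have htop : IntermediateField.adjoin (↥K') {genζ} = (⊤ : IntermediateField (↥K') ℚ⟮zc n⟯) :=
    IntermediateField.adjoin_eq_top_of_adjoin_eq_top ℚ hQgen
  have hgenint : IsIntegral (↥K') genζ := IsIntegral.of_finite _ genζ
  have hzne : zc n ≠ 0 := Complex.exp_ne_zero _
  -- genζ is not in K'
  have hnotmem : genζ ∉ (algebraMap (↥K') ℚ⟮zc n⟯).range := by
    rintro ⟨y, hy⟩
    have hyF : (y : ℚ⟮zc n⟯) = genζ := hy
    have hmem : ((y : ℚ⟮zc n⟯) : ℂ) ∈ IntermediateField.lift K' := by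
      exact ⟨(y : ℚ⟮zc n⟯), y.2, rfl⟩
    have hliftK : IntermediateField.lift K' ≤ Rfield := by
      rw [hK']; erw [IntermediateField.lift_adjoin_simple]
      rw [IntermediateField.adjoin_le_iff]
      intro x hx
      rw [Set.mem_singleton_iff] at hx
      subst hx
      rw [SetLike.mem_coe, mem_Rfield_iff]
      exact ⟨2 * Real.cos (π / n), haFc.symm⟩
    have hreal : ((y : ℚ⟮zc n⟯) : ℂ) ∈ Rfield := hliftK hmem
    rw [mem_Rfield_iff] at hreal
    obtain ⟨r, hr⟩ := hreal
    rw [hyF] at hr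
    have hgc : ((genζ : ℚ⟮zc n⟯) : ℂ) = zc n := rfl
    rw [hgc] at hr
    have him : (zc n).im = Real.sin (π / n) := by
      have := zc_pow n 1
      rw [pow_one, Nat.cast_one, one_mul] at this
      rw [this, Complex.exp_ofReal_mul_I_im]
    have hsin : 0 < Real.sin (π / n) := by
      apply Real.sin_pos_of_pos_of_lt_pi
      · positivity
      · apply div_lt_self Real.pi_pos
        exact_mod_cast by omega
    rw [← hr] at him
    simp at him
    rw [← him] at hsin
    exact lt_irrefl 0 hsin
  -- the minimal polynomial of genζ over K' has degree 2
  set a' : ↥K' := ⟨aF, IntermediateField.subset_adjoin ℚ {aF} rfl⟩ with ha'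
  set q : Polynomial ↥K' := X ^ 2 - C a' * X + 1 with hq
  have hqdeg : q.natDegree = 2 := by
    rw [hq]
    compute_degree!
  have hq0 : (Polynomial.aeval genζ) q = 0 := by
    rw [hq]
    simp only [map_add, map_sub, map_mul, map_pow, aeval_X, aeval_C, map_one]
    have hamap : algebraMap (↥K') ℚ⟮zc n⟯ a' = aF := rfl
    rw [hamap]
    apply Subtype.coe_injective
    push_cast
    have hgc : ((genζ : ℚ⟮zc n⟯) : ℂ) = zc n := rfl
    have hac : ((aF : ℚ⟮zc n⟯) : ℂ) = zc n + (zc n)⁻¹ := by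
      rw [haF]; push_cast; rfl
    rw [hgc, hac]
    field_simp
    ring
  have hmin2 : (minpoly (↥K') genζ).natDegree = 2 := by
    have hqne : q ≠ 0 := fun h => by simp [h] at hqdeg
    have hle : (minpoly (↥K') genζ).natDegree ≤ 2 := by
      have := Polynomial.natDegree_le_of_dvd (minpoly.dvd (↥K') genζ hq0) hqne
      omega
    have hge : 2 ≤ (minpoly (↥K') genζ).natDegree :=
      (minpoly.two_le_natDegree_iff hgenint).mpr hnotmem
    omega
  have hrank2 : Module.finrank (↥K') (↥ℚ⟮zc n⟯) = 2 := by
    calc Module.finrank (↥K') (↥ℚ⟮zc n⟯)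
        = Module.finrank (↥K') (↥(⊤ : IntermediateField (↥K') ℚ⟮zc n⟯)) :=
          (IntermediateField.finrank_top' (F := ↥K') (E := ↥ℚ⟮zc n⟯)).symm
    _ = Module.finrank (↥K') (↥(IntermediateField.adjoin (↥K') {genζ})) := by rw [htop]
    _ = (minpoly (↥K') genζ).natDegree := IntermediateField.adjoin.finrank hgenint
    _ = 2 := hmin2
  calc Nat.totient (2 * n) = Module.finrank ℚ ℚ⟮zc n⟯ := hrankF.symm
  _ = Module.finrank ℚ (↥K') * Module.finrank (↥K') (↥ℚ⟮zc n⟯) :=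
      (Module.finrank_mul_finrank ℚ (↥K') (↥ℚ⟮zc n⟯)).symm
  _ = 2 * m.natDegree := by rw [hrankK, hrank2]; ring


theorem card_filter (hn : 2 ≤ n) :
    2 * ((Finset.range n).filter (fun k => Nat.gcd k (2 * n) = 1)).card
      = Nat.totient (2 * n) := by
  set S := (Finset.range n).filter (fun k => Nat.gcd k (2 * n) = 1) with hS
  have key : ∀ k, k ≤ 2 * n → Nat.gcd k (2 * n) = 1 → Nat.gcd (2 * n - k) (2 * n) = 1 := by
    intro k hk hg
    have h1 : Nat.gcd (2 * n - k) (2 * n) ∣ k := by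
      have h2 : Nat.gcd (2 * n - k) (2 * n) ∣ 2 * n - k := Nat.gcd_dvd_left _ _
      have h3 : Nat.gcd (2 * n - k) (2 * n) ∣ 2 * n := Nat.gcd_dvd_right _ _
      have h4 := Nat.dvd_sub h3 h2
      rwa [Nat.sub_sub_self hk] at h4
    have h5 : Nat.gcd (2 * n - k) (2 * n) ∣ Nat.gcd k (2 * n) :=
      Nat.dvd_gcd h1 (Nat.gcd_dvd_right _ _)
    rw [hg] at h5
    exact Nat.eq_one_of_dvd_one h5
  have hpos : ∀ k ∈ S, 1 ≤ k := by
    intro k hk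
    rw [hS, Finset.mem_filter] at hk
    rcases Nat.eq_zero_or_pos k with h | h
    · exfalso
      rw [h] at hk
      have hg0 := hk.2
      rw [Nat.gcd_zero_left] at hg0
      omega
    · exact h
  have htot : Nat.totient (2 * n)
      = ((Finset.range (2 * n)).filter (fun k => Nat.gcd k (2 * n) = 1)).card := by
    rw [Nat.totient]
    congr 1
    apply Finset.filter_congr
    intro k _
    unfold Nat.Coprime
    rw [Nat.gcd_comm]
  have hunion : (Finset.range (2 * n)).filter (fun k => Nat.gcd k (2 * n) = 1)
      = S ∪ S.image (fun k => 2 * n - k) := by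
    apply Finset.ext
    intro k
    simp only [Finset.mem_union, Finset.mem_image, hS, Finset.mem_filter, Finset.mem_range]
    constructor
    · rintro ⟨hk2n, hg⟩
      have hkn : k ≠ n := by
        intro h
        rw [h, Nat.gcd_eq_left ⟨2, by ring⟩] at hg
        omega
      rcases lt_or_gt_of_ne hkn with h | h
      · exact Or.inl ⟨h, hg⟩
      · refine Or.inr ⟨2 * n - k, ⟨by omega, key k (by omega) hg⟩, by omega⟩
    · rintro (⟨hkn, hg⟩ | ⟨j, ⟨hjn, hg⟩, rfl⟩)
      · exact ⟨by omega, hg⟩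
      · have hj1 : 1 ≤ j := hpos j (by rw [hS, Finset.mem_filter]; exact ⟨Finset.mem_range.mpr hjn, hg⟩)
        exact ⟨by omega, key j (by omega) hg⟩
  have hdisj : Disjoint S (S.image (fun k => 2 * n - k)) := by
    rw [Finset.disjoint_left]
    intro k hk hk2
    rw [Finset.mem_image] at hk2
    obtain ⟨j, hj, hjk⟩ := hk2
    rw [hS, Finset.mem_filter, Finset.mem_range] at hk hj
    have := hpos j (by rw [hS, Finset.mem_filter, Finset.mem_range]; exact hj)
    omega
  have hinj : Set.InjOn (fun k => 2 * n - k) S := by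
    intro a ha b hb hab
    rw [Finset.mem_coe, hS, Finset.mem_filter, Finset.mem_range] at ha hb
    simp only at hab
    omega
  rw [htot, hunion, Finset.card_union_of_disjoint hdisj, Finset.card_image_of_injOn hinj]
  ring

end TwoCos

/-- For n ≥ 2, the monic polynomial ∏_{1≤k≤n-1, gcd(k,2n)=1} (x - 2cos(kπ/n)) is the
minimal polynomial of 2cos(π/n) over ℚ, has integer coefficients, and has degree φ(2n)/2. -/
theorem minpoly_two_cos_pi_div (n : ℕ) (hn : 2 ≤ n) :
    (minpoly ℚ ((2 : ℝ) * Real.cos (π / n))).map (algebraMap ℚ ℝ) =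
      ∏ k ∈ (Finset.range n).filter (fun k => Nat.gcd k (2 * n) = 1),
        (Polynomial.X - Polynomial.C (2 * Real.cos (k * π / n))) ∧
    (∀ i : ℕ, ∃ z : ℤ, (minpoly ℚ ((2 : ℝ) * Real.cos (π / n))).coeff i = (z : ℚ)) ∧
    (minpoly ℚ ((2 : ℝ) * Real.cos (π / n))).natDegree = Nat.totient (2 * n) / 2 := by
  set m := minpoly ℚ ((2:ℝ) * Real.cos (π / n)) with hm
  set S := (Finset.range n).filter (fun k => Nat.gcd k (2 * n) = 1) with hS
  have hintZ : IsIntegral ℤ ((2:ℝ) * Real.cos (π / n)) := by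
    have := TwoCos.isIntegral_cos n hn 1
    rwa [Nat.cast_one, one_mul] at this
  have hintQ : IsIntegral ℚ ((2:ℝ) * Real.cos (π / n)) := hintZ.tower_top
  have hdeg2 := TwoCos.totient_eq n hn
  have hcard := TwoCos.card_filter n hn
  rw [← hm] at hdeg2
  rw [← hS] at hcard
  have hcardeq : S.card = m.natDegree := by omega
  refine ⟨?_, ?_, by omega⟩
  · -- the product formula
    have hroot : ∀ k ∈ S, (m.map (algebraMap ℚ ℝ)).IsRoot (2 * Real.cos (k * π / n)) := by
      intro k hk
      rw [hS, Finset.mem_filter] at hk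
      rw [Polynomial.IsRoot.def, Polynomial.eval_map, ← Polynomial.aeval_def]
      exact TwoCos.aeval_conj n hn k hk.2
    have hinj : Set.InjOn (fun k : ℕ => 2 * Real.cos (k * π / n)) S := by
      intro a ha b hb hab
      rw [Finset.mem_coe, hS, Finset.mem_filter, Finset.mem_range] at ha hb
      simp only at hab
      have h2 : Real.cos (a * π / n) = Real.cos (b * π / n) := by linarith
      have hn0 : (0:ℝ) < n := by positivity
      have hmem : ∀ j : ℕ, j < n → ((j : ℝ) * π / n : ℝ) ∈ Set.Icc (0:ℝ) π := by
        intro j hj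
        constructor
        · positivity
        · rw [div_le_iff₀ hn0]
          have hjn : (j:ℝ) ≤ n := by exact_mod_cast hj.le
          nlinarith [Real.pi_pos]
      have h3 := Real.injOn_cos (hmem a ha.1) (hmem b hb.1) h2
      have hpi := Real.pi_pos
      field_simp at h3
      exact_mod_cast h3
    have hdvd : (∏ k ∈ S, (X - C (2 * Real.cos (k * π / n)))) ∣ m.map (algebraMap ℚ ℝ) := by
      apply Finset.prod_dvd_of_coprime
      · intro a ha b hb hab
        apply Polynomial.isCoprime_X_sub_C_of_isUnit_sub
        exact (sub_ne_zero_of_ne (fun h => hab (hinj ha hb h))).isUnit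
      · intro k hk
        rw [Polynomial.dvd_iff_isRoot]
        exact hroot k hk
    have hmonicP : (∏ k ∈ S, (X - C (2 * Real.cos (k * π / n)))).Monic :=
      monic_prod_of_monic _ _ (fun k _ => monic_X_sub_C _)
    have hmonicm : (m.map (algebraMap ℚ ℝ)).Monic := (minpoly.monic hintQ).map _
    have hdegP : (∏ k ∈ S, (X - C (2 * Real.cos (k * π / n)))).natDegree = S.card := by
      rw [Polynomial.natDegree_prod _ _ (fun k _ => X_sub_C_ne_zero _)]
      simp only [Polynomial.natDegree_X_sub_C]
      rw [Finset.sum_const, smul_eq_mul, mul_one]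
    have hdegm : (m.map (algebraMap ℚ ℝ)).natDegree = m.natDegree :=
      Polynomial.natDegree_map _
    exact Polynomial.eq_of_monic_of_dvd_of_natDegree_le hmonicP hmonicm hdvd
      (by rw [hdegm, hdegP, hcardeq])
  · -- integer coefficients
    intro i
    refine ⟨(minpoly ℤ ((2:ℝ) * Real.cos (π / n))).coeff i, ?_⟩
    have := minpoly.isIntegrallyClosed_eq_field_fractions' ℚ hintZ
    rw [hm, this, Polynomial.coeff_map]
    simp
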